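/- Let A be a symmetric real χ×χ matrix satisfying: A_{ii} = 1 for all i, 0 ≤ A_{ij} < 1 for i ≠ j, and A_{ij} ≥ min(A_{ik}, A_{jk}) for all i,j,k (ultrametric condition). Then A is positive definite (hence invertible) and all off-diagonal entries of A⁻¹ are ≤ 0. -/

import Mathlib

set_option linter.unusedSectionVars false
set_option maxHeartbeats 1000000

open scoped BigOperators

section Helpers
open Matrix
variable {α β : Type} [Fintype α] [Fintype β] [DecidableEq α] [DecidableEq β]

private lemma herm_fromBlocks {X : Matrix α α ℝ} {Y : Matrix β β ℝ}
    (hX : X.IsHermitian) (hY : Y.IsHermitian) : (fromBlocks X 0 0 Y).IsHermitian := by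
  have : (fromBlocks X 0 0 Y)ᴴ = fromBlocks Xᴴ 0ᴴ 0ᴴ Yᴴ := by
    rw [fromBlocks_conjTranspose]
  rw [Matrix.IsHermitian, this]
  simp only [conjTranspose_zero]
  rw [hX.eq, hY.eq]

private lemma quad_fromBlocks {X : Matrix α α ℝ} {Y : Matrix β β ℝ} (x : α ⊕ β → ℝ) :
    star x ⬝ᵥ (fromBlocks X 0 0 Y) *ᵥ x
      = star (x ∘ Sum.inl) ⬝ᵥ X *ᵥ (x ∘ Sum.inl) + star (x ∘ Sum.inr) ⬝ᵥ Y *ᵥ (x ∘ Sum.inr) := by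
  simp [dotProduct, mulVec, Fintype.sum_sum_type, Function.comp]

private lemma posDef_fromBlocks {X : Matrix α α ℝ} {Y : Matrix β β ℝ}
    (hX : X.PosDef) (hY : Y.PosDef) : (fromBlocks X 0 0 Y).PosDef := by
  refine PosDef.of_dotProduct_mulVec_pos (herm_fromBlocks hX.1 hY.1) fun x hx => ?_
  rw [quad_fromBlocks]
  rcases (by
    by_contra h
    push_neg at h
    apply hx
    ext z; cases z
    · exact congrFun h.1 _
    · exact congrFun h.2 _ : x ∘ Sum.inl ≠ 0 ∨ x ∘ Sum.inr ≠ 0) with h | h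
  · have := hX.dotProduct_mulVec_pos h
    have h2 := hY.posSemidef.dotProduct_mulVec_nonneg (x ∘ Sum.inr)
    linarith
  · have := hY.dotProduct_mulVec_pos h
    have h2 := hX.posSemidef.dotProduct_mulVec_nonneg (x ∘ Sum.inl)
    linarith

private lemma inv_fromBlocks_diag {X : Matrix α α ℝ} {Y : Matrix β β ℝ}
    (hX : IsUnit X.det) (hY : IsUnit Y.det) :
    (fromBlocks X 0 0 Y)⁻¹ = fromBlocks X⁻¹ 0 0 Y⁻¹ := by
  apply inv_eq_left_inv
  rw [fromBlocks_multiply]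
  simp [Matrix.nonsing_inv_mul _ hX, Matrix.nonsing_inv_mul _ hY, fromBlocks_one]

private lemma posDef_submatrix_equiv {m n : Type} [Fintype m] [Fintype n] [DecidableEq m]
    [DecidableEq n] {M : Matrix m m ℝ} (hM : M.PosDef) (e : n ≃ m) :
    (M.submatrix e e).PosDef := by
  refine PosDef.of_dotProduct_mulVec_pos ?_ ?_
  · show (M.submatrix e e)ᴴ = _
    rw [conjTranspose_submatrix, hM.1.eq]
  · intro x hx
    have hy : (x ∘ e.symm) ≠ 0 := by
      intro h
      apply hx
      ext i
      simpa using congrFun h (e i)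
    have hq := hM.dotProduct_mulVec_pos hy
    have : star x ⬝ᵥ (M.submatrix e e) *ᵥ x = star (x ∘ e.symm) ⬝ᵥ M *ᵥ (x ∘ e.symm) := by
      simp only [dotProduct, mulVec, submatrix_apply, Pi.star_apply, Function.comp]
      refine Fintype.sum_equiv e _ _ (fun i => ?_)
      simp only [Equiv.symm_apply_apply]
      congr 1
      refine Fintype.sum_equiv e _ _ (fun j => ?_)
      simp
    rw [this]
    exact hq

private lemma posDef_smul {M : Matrix α α ℝ} (hM : M.PosDef) {c : ℝ} (hc : 0 < c) :
    (c • M).PosDef := by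
  refine PosDef.of_dotProduct_mulVec_pos ?_ ?_
  · show (c • M)ᴴ = _
    rw [conjTranspose_smul, hM.1.eq]
    simp
  · intro x hx
    have := hM.dotProduct_mulVec_pos hx
    rw [smul_mulVec, dotProduct_smul]
    exact mul_pos hc this

end Helpers

open Matrix Finset in
private lemma ultrametric_key : ∀ (N : ℕ) (n : Type) [Fintype n] [DecidableEq n]
    (A : Matrix n n ℝ), Fintype.card n = N → A.IsSymm → (∀ i, A i i = 1) →
    (∀ i j, i ≠ j → 0 ≤ A i j ∧ A i j < 1) →
    (∀ i j k, min (A i k) (A j k) ≤ A i j) →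
    A.PosDef ∧ (∀ i j, i ≠ j → A⁻¹ i j ≤ 0) ∧ (∀ i, 0 ≤ ∑ j, A⁻¹ i j) := by
  intro N
  induction N using Nat.strong_induction_on with
  | _ N IH =>
  intro n _ _ A hcard hsymm hdiag hoff hultra
  have hsym' : ∀ i j, A i j = A j i := fun i j => (congrFun (congrFun hsymm i) j).symm
  have hherm : A.IsHermitian := by
    ext i j
    simp only [conjTranspose_apply, star_trivial]
    exact (hsym' i j).symm
  by_cases hc1 : Fintype.card n ≤ 1
  · -- base case : card ≤ 1
    have hsub : Subsingleton n := Fintype.card_le_one_iff_subsingleton.mp hc1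
    by_cases hem : Nonempty n
    · obtain ⟨i0⟩ := hem
      have hA1 : A = 1 := by
        ext i j
        have : i = j := Subsingleton.elim i j
        subst this
        simp [hdiag, Matrix.one_apply]
      subst hA1
      refine ⟨Matrix.PosDef.one, ?_, ?_⟩
      · intro i j hij
        exact absurd (Subsingleton.elim i j) hij
      · intro i
        rw [inv_one]
        have : ∑ j, (1 : Matrix n n ℝ) i j = 1 := by
          simp [Matrix.one_apply]
        rw [this]
        norm_num
    · have : IsEmpty n := not_nonempty_iff.mp hem
      refine ⟨PosDef.of_dotProduct_mulVec_pos hherm fun x hx => ?_, fun i => isEmptyElim i, fun i => isEmptyElim i⟩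
      exact absurd (funext fun i => isEmptyElim i) hx
  · -- main case : card ≥ 2
    push_neg at hc1
    obtain ⟨i0, j0, hij0⟩ := Fintype.exists_pair_of_one_lt_card hc1
    set F : Finset ℝ := Finset.univ.offDiag.image (fun p => A p.1 p.2) with hF
    have hFne : F.Nonempty := ⟨A i0 j0, Finset.mem_image.mpr ⟨(i0, j0),
      Finset.mem_offDiag.mpr ⟨Finset.mem_univ _, Finset.mem_univ _, hij0⟩, rfl⟩⟩
    set t : ℝ := F.min' hFne with htdef
    have ht_le : ∀ i j, i ≠ j → t ≤ A i j := by
      intro i j hij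
      exact Finset.min'_le _ _ (Finset.mem_image.mpr ⟨(i, j),
        Finset.mem_offDiag.mpr ⟨Finset.mem_univ _, Finset.mem_univ _, hij⟩, rfl⟩)
    obtain ⟨pq, hpqmem, hpqval⟩ := Finset.mem_image.mp (F.min'_mem hFne)
    obtain ⟨-, -, hpq⟩ := Finset.mem_offDiag.mp hpqmem
    set p := pq.1 with hp
    set q := pq.2 with hq
    have ht0 : 0 ≤ t := by rw [htdef, ← hpqval]; exact (hoff p q hpq).1
    have ht1 : t < 1 := by rw [htdef, ← hpqval]; exact (hoff p q hpq).2
    have h1t : (0:ℝ) < 1 - t := by linarith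
    -- the equivalence class of p
    set P : n → Prop := fun i => i = p ∨ t < A i p with hPdef
    letI hdecP : DecidablePred P := fun i => decidable_of_iff (i = p ∨ t < A i p) Iff.rfl
    have hPp : P p := Or.inl rfl
    have hPq : ¬ P q := by
      rintro (h | h)
      · exact hpq h.symm
      · rw [hsym' q p, hpqval] at h
        exact lt_irrefl _ h
    have hcross : ∀ i j, P i → ¬ P j → A i j = t := by
      intro i j hi hj
      have hij : i ≠ j := fun h => hj (h ▸ hi)
      have hjp : j ≠ p := fun h => hj (h ▸ hPp)
      have hjpt : A j p = t := le_antisymm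
        (not_lt.mp (fun hh => hj (Or.inr hh))) (ht_le j p hjp)
      refine le_antisymm ?_ (ht_le i j hij)
      by_contra h
      push_neg at h
      rcases hi with rfl | hi
      · rw [hsym' p j, hjpt] at h
        exact lt_irrefl _ h
      · have := hultra j p i
        rw [min_le_iff] at this
        rcases this with h2 | h2
        · rw [hsym' j i] at h2
          rw [hjpt] at h2
          exact absurd (lt_of_lt_of_le h h2) (lt_irrefl _)
        · rw [hsym' p i] at h2
          rw [hjpt] at h2
          exact absurd (lt_of_lt_of_le hi h2) (lt_irrefl _)
    -- the restriction of A to any subset, rescaled, is again ultrametric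
    have hsubIH : ∀ (Q : n → Prop) (_ : DecidablePred Q), Fintype.card {i // Q i} < N →
        ((Matrix.of (fun (i j : {i // Q i}) => (A i.1 j.1 - t) / (1 - t))).PosDef ∧
        (∀ i j, i ≠ j →
          (Matrix.of (fun (i j : {i // Q i}) => (A i.1 j.1 - t) / (1 - t)))⁻¹ i j ≤ 0) ∧
        (∀ i, 0 ≤ ∑ j,
          (Matrix.of (fun (i j : {i // Q i}) => (A i.1 j.1 - t) / (1 - t)))⁻¹ i j)) := by
      intro Q instQ hlt
      refine IH _ hlt _ _ rfl ?_ ?_ ?_ ?_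
      · show _ᵀ = _
        ext i j
        simp only [transpose_apply, Matrix.of_apply]
        rw [hsym' j.1 i.1]
      · intro i
        show (A i.1 i.1 - t) / (1 - t) = 1
        rw [hdiag]
        field_simp
      · intro i j hij
        have hne : i.1 ≠ j.1 := fun h => hij (Subtype.ext h)
        constructor
        · show 0 ≤ (A i.1 j.1 - t) / (1 - t)
          apply div_nonneg _ h1t.le
          linarith [ht_le _ _ hne]
        · show (A i.1 j.1 - t) / (1 - t) < 1
          rw [div_lt_one h1t]
          linarith [(hoff _ _ hne).2]
      · intro i j k
        show min ((A i.1 k.1 - t) / (1 - t)) ((A j.1 k.1 - t) / (1 - t))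
          ≤ (A i.1 j.1 - t) / (1 - t)
        rw [min_div_div_right h1t.le, div_le_div_iff_of_pos_right h1t]
        have : min (A i.1 k.1 - t) (A j.1 k.1 - t) = min (A i.1 k.1) (A j.1 k.1) - t := by
          rcases min_cases (A i.1 k.1) (A j.1 k.1) with ⟨h1, h2⟩ | ⟨h1, h2⟩ <;>
            rcases min_cases (A i.1 k.1 - t) (A j.1 k.1 - t) with ⟨h3, h4⟩ | ⟨h3, h4⟩ <;>
            simp [h1, h3] <;> linarith
        rw [this]
        linarith [hultra i.1 j.1 k.1]
    -- apply induction hypothesis to the two blocks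
    have hcardsum : Fintype.card {i // P i} + Fintype.card {i // ¬ P i} = N := by
      rw [← hcard, ← Fintype.card_sum]
      exact Fintype.card_congr (Equiv.sumCompl P)
    have hαpos : 0 < Fintype.card {i // P i} := Fintype.card_pos_iff.mpr ⟨⟨p, hPp⟩⟩
    have hβpos : 0 < Fintype.card {i // ¬ P i} := Fintype.card_pos_iff.mpr ⟨⟨q, hPq⟩⟩
    obtain ⟨hB₁pd, hB₁off, hB₁row⟩ := hsubIH P hdecP (by omega)
    obtain ⟨hB₂pd, hB₂off, hB₂row⟩ := hsubIH (fun i => ¬ P i) (fun i => instDecidableNot)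
      (by show Fintype.card {i // ¬ P i} < N; omega)
    set B₁ : Matrix {i // P i} {i // P i} ℝ :=
      Matrix.of (fun (i j : {i // P i}) => (A i.1 j.1 - t) / (1 - t)) with hB₁
    set B₂ : Matrix {i // ¬ P i} {i // ¬ P i} ℝ :=
      Matrix.of (fun (i j : {i // ¬ P i}) => (A i.1 j.1 - t) / (1 - t)) with hB₂
    set X := (1 - t) • B₁ with hX
    set Y := (1 - t) • B₂ with hY
    have hXpd : X.PosDef := posDef_smul hB₁pd h1t
    have hYpd : Y.PosDef := posDef_smul hB₂pd h1t
    have hXdet : IsUnit X.det := hXpd.det_pos.ne'.isUnit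
    have hYdet : IsUnit Y.det := hYpd.det_pos.ne'.isUnit
    haveI : Invertible (1 - t : ℝ) := invertibleOfNonzero h1t.ne'
    have hXinv : X⁻¹ = (1 - t)⁻¹ • B₁⁻¹ := by
      apply inv_eq_left_inv
      rw [hX, Matrix.smul_mul, Matrix.mul_smul, smul_smul, inv_mul_cancel₀ h1t.ne', one_smul,
        nonsing_inv_mul _ hB₁pd.det_pos.ne'.isUnit]
    have hYinv : Y⁻¹ = (1 - t)⁻¹ • B₂⁻¹ := by
      apply inv_eq_left_inv
      rw [hY, Matrix.smul_mul, Matrix.mul_smul, smul_smul, inv_mul_cancel₀ h1t.ne', one_smul,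
        nonsing_inv_mul _ hB₂pd.det_pos.ne'.isUnit]
    set e : {i // P i} ⊕ {i // ¬ P i} ≃ n := Equiv.sumCompl P with he
    set D : Matrix n n ℝ := fun i j => A i j - t with hD
    have hDsub : D.submatrix ⇑e ⇑e = fromBlocks X 0 0 Y := by
      ext z w
      cases z with
      | inl a =>
        cases w with
        | inl b =>
          show A a.1 b.1 - t = (1 - t) * ((A a.1 b.1 - t) / (1 - t))
          field_simp
        | inr b =>
          show A a.1 b.1 - t = 0
          rw [hcross a.1 b.1 a.2 b.2]
          ring
      | inr a =>
        cases w with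
        | inl b =>
          show A a.1 b.1 - t = 0
          rw [hsym' a.1 b.1, hcross b.1 a.1 b.2 a.2]
          ring
        | inr b =>
          show A a.1 b.1 - t = (1 - t) * ((A a.1 b.1 - t) / (1 - t))
          field_simp
    have hD' : D = (fromBlocks X 0 0 Y).submatrix ⇑e.symm ⇑e.symm := by
      rw [← hDsub, submatrix_submatrix]
      have h1 : ⇑e ∘ ⇑e.symm = id := funext (e.apply_symm_apply)
      rw [h1, submatrix_id_id]
    have hDpd : D.PosDef := by
      rw [hD']
      exact posDef_submatrix_equiv (posDef_fromBlocks hXpd hYpd) e.symm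
    have hDdet : IsUnit D.det := hDpd.det_pos.ne'.isUnit
    have hDinv : D⁻¹ = (fromBlocks X⁻¹ 0 0 Y⁻¹).submatrix ⇑e.symm ⇑e.symm := by
      rw [hD', inv_submatrix_equiv, inv_fromBlocks_diag hXdet hYdet]
    have hDt : Dᵀ = D := by
      ext i j
      show A j i - t = A i j - t
      rw [hsym' j i]
    have hDinvsym : ∀ i j, D⁻¹ i j = D⁻¹ j i := by
      have h2 : D⁻¹ᵀ = D⁻¹ := by rw [transpose_nonsing_inv, hDt]
      intro i j
      exact (congrFun (congrFun h2 i) j).symm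
    -- entrywise facts about the inverse of the block matrix
    have hXoff : ∀ a b, a ≠ b → X⁻¹ a b ≤ 0 := by
      intro a b hab
      rw [hXinv]
      show (1 - t)⁻¹ * B₁⁻¹ a b ≤ 0
      exact mul_nonpos_of_nonneg_of_nonpos (inv_nonneg.mpr h1t.le) (hB₁off a b hab)
    have hYoff : ∀ a b, a ≠ b → Y⁻¹ a b ≤ 0 := by
      intro a b hab
      rw [hYinv]
      show (1 - t)⁻¹ * B₂⁻¹ a b ≤ 0
      exact mul_nonpos_of_nonneg_of_nonpos (inv_nonneg.mpr h1t.le) (hB₂off a b hab)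
    have hXrow : ∀ a, 0 ≤ ∑ b, X⁻¹ a b := by
      intro a
      rw [hXinv]
      have : ∑ b, ((1 - t)⁻¹ • B₁⁻¹) a b = (1 - t)⁻¹ * ∑ b, B₁⁻¹ a b := by
        rw [Finset.mul_sum]
        rfl
      rw [this]
      exact mul_nonneg (inv_nonneg.mpr h1t.le) (hB₁row a)
    have hYrow : ∀ a, 0 ≤ ∑ b, Y⁻¹ a b := by
      intro a
      rw [hYinv]
      have : ∑ b, ((1 - t)⁻¹ • B₂⁻¹) a b = (1 - t)⁻¹ * ∑ b, B₂⁻¹ a b := by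
        rw [Finset.mul_sum]
        rfl
      rw [this]
      exact mul_nonneg (inv_nonneg.mpr h1t.le) (hB₂row a)
    have hFoff : ∀ z w, z ≠ w → (fromBlocks X⁻¹ 0 0 Y⁻¹) z w ≤ 0 := by
      rintro (a | a) (b | b) hzw
      · exact hXoff a b (fun h => hzw (by rw [h]))
      · show (0 : Matrix _ _ ℝ) a b ≤ 0
        simp
      · show (0 : Matrix _ _ ℝ) a b ≤ 0
        simp
      · exact hYoff a b (fun h => hzw (by rw [h]))
    have hFrow : ∀ z, 0 ≤ ∑ w, (fromBlocks X⁻¹ 0 0 Y⁻¹) z w := by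
      rintro (a | a)
      · rw [Fintype.sum_sum_type]
        have h1 : ∑ b, (fromBlocks X⁻¹ 0 0 Y⁻¹) (Sum.inl a) (Sum.inl b) = ∑ b, X⁻¹ a b := rfl
        have h2 : ∑ b, (fromBlocks X⁻¹ 0 0 Y⁻¹) (Sum.inl a) (Sum.inr b) = 0 := by
          simp [fromBlocks]
        rw [h1, h2, add_zero]
        exact hXrow a
      · rw [Fintype.sum_sum_type]
        have h1 : ∑ b, (fromBlocks X⁻¹ 0 0 Y⁻¹) (Sum.inr a) (Sum.inl b) = 0 := by
          simp [fromBlocks]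
        have h2 : ∑ b, (fromBlocks X⁻¹ 0 0 Y⁻¹) (Sum.inr a) (Sum.inr b) = ∑ b, Y⁻¹ a b := rfl
        rw [h1, h2, zero_add]
        exact hYrow a
    have hDoff : ∀ i j, i ≠ j → D⁻¹ i j ≤ 0 := by
      intro i j hij
      rw [hDinv]
      exact hFoff _ _ (fun h => hij (e.symm.injective h))
    set u : n → ℝ := fun i => ∑ j, D⁻¹ i j with hu_def
    have hu : ∀ i, 0 ≤ u i := by
      intro i
      show 0 ≤ ∑ j, D⁻¹ i j
      have : ∑ j, D⁻¹ i j = ∑ w, (fromBlocks X⁻¹ 0 0 Y⁻¹) (e.symm i) w := by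
        rw [hDinv]
        exact Equiv.sum_comp e.symm _
      rw [this]
      exact hFrow _
    set s : ℝ := ∑ i, u i with hs_def
    have hs : 0 ≤ s := Finset.sum_nonneg fun i _ => hu i
    have hden : 0 < 1 + t * s := by
      have := mul_nonneg ht0 hs
      linarith
    set c : ℝ := t / (1 + t * s) with hc_def
    have hcge : 0 ≤ c := div_nonneg ht0 hden.le
    have hcid : c + c * t * s = t := by
      rw [hc_def]
      field_simp
    set M : Matrix n n ℝ := fun i j => D⁻¹ i j - c * u i * u j with hM
    have hDDinv : D⁻¹ * D = 1 := nonsing_inv_mul D hDdet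
    have hDmul : ∀ i j, ∑ k, D⁻¹ i k * D k j = (1 : Matrix n n ℝ) i j := fun i j => by
      rw [← Matrix.mul_apply, hDDinv]
    have hcol : ∀ j, ∑ k, u k * D k j = 1 := by
      intro j
      calc ∑ k, u k * D k j = ∑ k, ∑ l, D⁻¹ k l * D k j := by
            refine Finset.sum_congr rfl fun k _ => ?_
            rw [hu_def]
            exact Finset.sum_mul _ _ _
        _ = ∑ l, ∑ k, D⁻¹ k l * D k j := Finset.sum_comm
        _ = ∑ l, ∑ k, D⁻¹ l k * D k j := by
            refine Finset.sum_congr rfl fun l _ => Finset.sum_congr rfl fun k _ => ?_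
            rw [hDinvsym k l]
        _ = ∑ l, (1 : Matrix n n ℝ) l j := Finset.sum_congr rfl fun l _ => hDmul l j
        _ = 1 := by simp [Matrix.one_apply]
    have hMA : M * A = 1 := by
      ext i j
      rw [Matrix.mul_apply]
      have expand : ∀ k, M i k * A k j
          = D⁻¹ i k * D k j + t * D⁻¹ i k - c * u i * (u k * D k j) - c * t * u i * u k := by
        intro k
        have hAkj : A k j = D k j + t := by
          show A k j = (A k j - t) + t
          ring
        rw [hAkj]
        show (D⁻¹ i k - c * u i * u k) * (D k j + t) = _
        ring
      rw [Finset.sum_congr rfl (fun k _ => expand k)]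
      have hsplit : ∑ k, (D⁻¹ i k * D k j + t * D⁻¹ i k - c * u i * (u k * D k j)
            - c * t * u i * u k)
          = (∑ k, D⁻¹ i k * D k j) + t * (∑ k, D⁻¹ i k)
            - c * u i * (∑ k, u k * D k j) - c * t * u i * (∑ k, u k) := by
        rw [Finset.sum_sub_distrib, Finset.sum_sub_distrib, Finset.sum_add_distrib,
          ← Finset.mul_sum, ← Finset.mul_sum, ← Finset.mul_sum]
      rw [hsplit, hDmul i j, hcol j]
      have h1 : (∑ k, D⁻¹ i k) = u i := rfl
      have h2 : (∑ k, u k) = s := rfl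
      rw [h1, h2]
      have : t * u i - c * u i * 1 - c * t * u i * s = u i * (t - (c + c * t * s)) := by ring
      rw [hcid] at this
      simp only [sub_self, mul_zero] at this
      linarith [this]
    have hAinv : A⁻¹ = M := inv_eq_left_inv hMA
    -- positive definiteness of A
    have hApd : A.PosDef := by
      refine PosDef.of_dotProduct_mulVec_pos hherm fun x hx => ?_
      have hsplit : star x ⬝ᵥ A *ᵥ x
          = star x ⬝ᵥ D *ᵥ x + t * (∑ i, x i) * (∑ i, x i) := by
        simp only [dotProduct, mulVec, Pi.star_apply, star_trivial]
        have h1 : ∀ i, ∑ j, A i j * x j = (∑ j, D i j * x j) + t * ∑ j, x j := by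
          intro i
          calc ∑ j, A i j * x j = ∑ j, (D i j * x j + t * x j) := by
                refine Finset.sum_congr rfl fun j _ => ?_
                show A i j * x j = (A i j - t) * x j + t * x j
                ring
            _ = (∑ j, D i j * x j) + ∑ j, t * x j := Finset.sum_add_distrib
            _ = _ := by rw [← Finset.mul_sum]
        calc ∑ i, x i * ∑ j, A i j * x j
            = ∑ i, (x i * ∑ j, D i j * x j + t * x i * ∑ j, x j) := by
              refine Finset.sum_congr rfl fun i _ => ?_
              rw [h1]
              ring
          _ = (∑ i, x i * ∑ j, D i j * x j) + ∑ i, t * x i * ∑ j, x j :=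
              Finset.sum_add_distrib
          _ = (∑ i, x i * ∑ j, D i j * x j) + t * (∑ i, x i) * (∑ j, x j) := by
              congr 1
              rw [← Finset.sum_mul, ← Finset.mul_sum]
      rw [hsplit]
      have h2 := hDpd.dotProduct_mulVec_pos hx
      have h3 : 0 ≤ t * (∑ i, x i) * (∑ i, x i) := by
        rw [mul_assoc]
        exact mul_nonneg ht0 (mul_self_nonneg _)
      linarith
    refine ⟨hApd, ?_, ?_⟩
    · intro i j hij
      rw [hAinv]
      show D⁻¹ i j - c * u i * u j ≤ 0
      have h1 := hDoff i j hij
      have h2 : 0 ≤ c * u i * u j := mul_nonneg (mul_nonneg hcge (hu i)) (hu j)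
      linarith
    · intro i
      rw [hAinv]
      have hsum : ∑ j, M i j = u i - c * u i * s := by
        show ∑ j, (D⁻¹ i j - c * u i * u j) = _
        rw [Finset.sum_sub_distrib]
        congr 1
        rw [← Finset.mul_sum]
      rw [hsum]
      have hcs : c * s ≤ 1 := by
        rw [hc_def, div_mul_eq_mul_div, div_le_one hden]
        linarith [mul_nonneg ht0 hs]
      have := mul_nonneg (hu i) (sub_nonneg.mpr hcs)
      nlinarith [hu i]

/-- Ultrametric matrices are positive definite and their inverses have
nonpositive off-diagonal entries. -/
theorem ultrametric_matrix_posdef (χ : ℕ) (A : Matrix (Fin χ) (Fin χ) ℝ)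
    (hsymm : A.IsSymm) (hdiag : ∀ i, A i i = 1)
    (hoff : ∀ i j, i ≠ j → 0 ≤ A i j ∧ A i j < 1)
    (hultra : ∀ i j k, min (A i k) (A j k) ≤ A i j) :
    A.PosDef ∧ ∀ i j, i ≠ j → A⁻¹ i j ≤ 0 := by
  obtain ⟨h1, h2, -⟩ :=
    ultrametric_key (Fintype.card (Fin χ)) (Fin χ) A rfl hsymm hdiag hoff hultra
  exact ⟨h1, h2⟩
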